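/- No word of length at most 6 over the alphabet {1,2,3} contains every permutation of {1,2,3} as a subsequence; hence the minimal length of a word containing all permutations of {1,2,3} as subsequences is 7. -/
import Mathlib

/-- All words over {1,2,3} of length at most `n`. -/
def allW : ℕ → List (List ℕ)
  | 0 => [[]]
  | n+1 => [] :: (allW n).flatMap (fun w => [1::w, 2::w, 3::w])

/-- The six permutations of {1,2,3}. -/
def perms3 : List (List ℕ) := [[1,2,3],[1,3,2],[2,1,3],[2,3,1],[3,1,2],[3,2,1]]

lemma mem_allW : ∀ (n : ℕ) (w : List ℕ),
    (∀ x ∈ w, x ∈ ({1, 2, 3} : Set ℕ)) → w.length ≤ n → w ∈ allW n := by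
  intro n
  induction n with
  | zero =>
    intro w _ hl
    have : w = [] := List.eq_nil_of_length_eq_zero (Nat.le_zero.mp hl)
    simp [this, allW]
  | succ n ih =>
    intro w hmem hl
    cases w with
    | nil => simp [allW]
    | cons a t =>
      have ha : a ∈ ({1, 2, 3} : Set ℕ) := hmem a (by simp)
      have ht : t ∈ allW n := ih t (fun x hx => hmem x (by simp [hx]))
        (by simpa using Nat.succ_le_succ_iff.mp hl)
      simp only [allW, List.mem_cons, List.mem_flatMap]
      refine Or.inr ⟨t, ht, ?_⟩
      simp only [Set.mem_insert_iff, Set.mem_singleton_iff] at ha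
      rcases ha with h | h | h <;> simp [h]

set_option maxRecDepth 100000 in
lemma key1 : ∀ w ∈ allW 5, ∃ π ∈ perms3, ¬ π.Sublist (1 :: w) := by decide

set_option maxRecDepth 100000 in
lemma key2 : ∀ w ∈ allW 5, ∃ π ∈ perms3, ¬ π.Sublist (2 :: w) := by decide

set_option maxRecDepth 100000 in
lemma key3 : ∀ w ∈ allW 5, ∃ π ∈ perms3, ¬ π.Sublist (3 :: w) := by decide

lemma perm_mem_perms3 : ∀ π : List ℕ, π.Perm [1, 2, 3] → π ∈ perms3 := by
  intro π hπ
  have hl : π.length = 3 := hπ.length_eq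
  rcases π with _ | ⟨a, _ | ⟨b, _ | ⟨c, _ | ⟨d, t⟩⟩⟩⟩ <;> simp_all
  have ha : a ∈ ([1,2,3] : List ℕ) := hπ.mem_iff.mp (by simp)
  have hb : b ∈ ([1,2,3] : List ℕ) := hπ.mem_iff.mp (by simp)
  have hc : c ∈ ([1,2,3] : List ℕ) := hπ.mem_iff.mp (by simp)
  fin_cases ha <;> fin_cases hb <;> fin_cases hc <;>
    first
      | exact absurd hπ (by decide)
      | decide

lemma perms3_perm : ∀ π ∈ perms3, π.Perm [1, 2, 3] := by
  intro π hπ; fin_cases hπ <;> decide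

/-- No word of length ≤ 6 over {1,2,3} contains all permutations of {1,2,3} as
subsequences; hence the minimal length of such a universal word is 7. -/
theorem stmt_1 :
    (∀ w : List ℕ, (∀ x ∈ w, x ∈ ({1, 2, 3} : Set ℕ)) → w.length ≤ 6 →
      ∃ π : List ℕ, π.Perm [1, 2, 3] ∧ ¬ π.Sublist w) ∧
    IsLeast {L : ℕ | ∃ w : List ℕ, (∀ x ∈ w, x ∈ ({1, 2, 3} : Set ℕ)) ∧
      w.length = L ∧ ∀ π : List ℕ, π.Perm [1, 2, 3] → π.Sublist w} 7 := by
  have main : ∀ w : List ℕ, (∀ x ∈ w, x ∈ ({1, 2, 3} : Set ℕ)) → w.length ≤ 6 →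
      ∃ π : List ℕ, π.Perm [1, 2, 3] ∧ ¬ π.Sublist w := by
    intro w hmem hl
    cases w with
    | nil => exact ⟨[1,2,3], by decide, by decide⟩
    | cons a t =>
      have ha : a ∈ ({1, 2, 3} : Set ℕ) := hmem a (by simp)
      have ht : t ∈ allW 5 := mem_allW 5 t (fun x hx => hmem x (by simp [hx]))
        (by simpa using Nat.succ_le_succ_iff.mp hl)
      simp only [Set.mem_insert_iff, Set.mem_singleton_iff] at ha
      rcases ha with h | h | h <;> subst h
      · obtain ⟨π, hπ, hns⟩ := key1 t ht
        exact ⟨π, perms3_perm π hπ, hns⟩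
      · obtain ⟨π, hπ, hns⟩ := key2 t ht
        exact ⟨π, perms3_perm π hπ, hns⟩
      · obtain ⟨π, hπ, hns⟩ := key3 t ht
        exact ⟨π, perms3_perm π hπ, hns⟩
  refine ⟨main, ⟨[1,2,3,1,2,1,3], ?_, rfl, ?_⟩, ?_⟩
  · intro x hx; fin_cases hx <;> simp
  · intro π hπ
    have := perm_mem_perms3 π hπ
    fin_cases this <;> decide
  · rintro L ⟨w, hmem, hlen, huniv⟩
    by_contra h
    push_neg at h
    obtain ⟨π, hπ, hns⟩ := main w hmem (by omega)
    exact hns (huniv π hπ)
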